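/- Let $R_\Theta := \mathbb{Z}[X_1,X_2]/(X_1^2X_2 + X_1X_2^2,\; X_1^2 + X_2^2 + X_1X_2)$ and consider the $\mathbb{Z}$-linear maps $d^0 : R_\Theta \to R_\Theta \oplus R_\Theta$, $d^0(r) = (X_1 r,\, X_2 r)$, and $d^1 : R_\Theta \oplus R_\Theta \to R_\Theta$, $d^1(a,b) = X_1 b - X_2 a$. Then $d^1 \circ d^0 = 0$, and the three homology groups $\ker d^0$, $\ker d^1/\operatorname{im} d^0$, and $R_\Theta/\operatorname{im} d^1$ are free abelian groups of ranks $1$, $2$, and $1$ respectively; in particular the total homology is a free abelian group of rank 4. -/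

import Mathlib

open MvPolynomial

noncomputable section

/-- The defining ideal of the graph ring of the planar theta graph. -/
abbrev thetaIdeal : Ideal (MvPolynomial (Fin 2) ℤ) :=
  Ideal.span {X 0 ^ 2 * X 1 + X 0 * X 1 ^ 2, X 0 ^ 2 + X 1 ^ 2 + X 0 * X 1}

/-- The graph ring `R_Θ = ℤ[X₁,X₂]/(X₁²X₂ + X₁X₂², X₁² + X₂² + X₁X₂)` of the
planar theta graph. -/
abbrev RTheta := MvPolynomial (Fin 2) ℤ ⧸ thetaIdeal

/-- The residue class of `X₁` in `R_Θ`. -/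
abbrev RTheta.x1 : RTheta := Ideal.Quotient.mk thetaIdeal (X 0)

/-- The residue class of `X₂` in `R_Θ`. -/
abbrev RTheta.x2 : RTheta := Ideal.Quotient.mk thetaIdeal (X 1)

/-- The first Koszul differential `d⁰(r) = (X₁ r, X₂ r)`. -/
def kosZeroZ : RTheta →ₗ[ℤ] RTheta × RTheta :=
  (LinearMap.mulLeft ℤ RTheta.x1).prod (LinearMap.mulLeft ℤ RTheta.x2)

/-- The second Koszul differential `d¹(a, b) = X₁ b - X₂ a`. -/
def kosOneZ : RTheta × RTheta →ₗ[ℤ] RTheta :=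
  (LinearMap.mulLeft ℤ RTheta.x1).comp (LinearMap.snd ℤ RTheta RTheta) -
    (LinearMap.mulLeft ℤ RTheta.x2).comp (LinearMap.fst ℤ RTheta RTheta)

namespace ThetaAux

abbrev V := Fin 6 → ℤ

def nf : ℕ → ℕ → V
  | 0, 0 => ![1,0,0,0,0,0]
  | 1, 0 => ![0,1,0,0,0,0]
  | 0, 1 => ![0,0,1,0,0,0]
  | 1, 1 => ![0,0,0,1,0,0]
  | 0, 2 => ![0,0,0,0,1,0]
  | 1, 2 => ![0,0,0,0,0,1]
  | 2, 0 => ![0,0,0,-1,-1,0]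
  | 2, 1 => ![0,0,0,0,0,-1]
  | _, _ => 0

lemma nf_eq_zero (a b : ℕ) (h : 3 ≤ a ∨ 3 ≤ b ∨ (2 ≤ a ∧ 2 ≤ b)) : nf a b = 0 := by
  match a, b with
  | 0, 0 => omega
  | 1, 0 => omega
  | 0, 1 => omega
  | 1, 1 => omega
  | 0, 2 => omega
  | 1, 2 => omega
  | 2, 0 => omega
  | 2, 1 => omega
  | 2, (b+2) => rfl
  | (a+3), b => rfl
  | 0, (b+3) => rfl
  | 1, (b+3) => rfl

lemma nfrel1 (a b : ℕ) : nf (a+2) (b+1) + nf (a+1) (b+2) = 0 := by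
  rcases a with _|a <;> rcases b with _|b
  · funext i; fin_cases i <;> decide
  · rw [nf_eq_zero _ _ (by omega), nf_eq_zero _ _ (by omega)]; simp
  · rw [nf_eq_zero _ _ (by omega), nf_eq_zero _ _ (by omega)]; simp
  · rw [nf_eq_zero _ _ (by omega), nf_eq_zero _ _ (by omega)]; simp

lemma nfrel2 (a b : ℕ) : nf (a+2) b + nf (a+1) (b+1) + nf a (b+2) = 0 := by
  rcases a with _|_|a <;> rcases b with _|_|b
  · funext i; fin_cases i <;> decide
  · funext i; fin_cases i <;> decide
  · rw [nf_eq_zero _ _ (by omega), nf_eq_zero _ _ (by omega), nf_eq_zero _ _ (by omega)]; simp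
  · funext i; fin_cases i <;> decide
  · funext i; fin_cases i <;> decide
  · rw [nf_eq_zero _ _ (by omega), nf_eq_zero _ _ (by omega), nf_eq_zero _ _ (by omega)]; simp
  · rw [nf_eq_zero _ _ (by omega), nf_eq_zero _ _ (by omega), nf_eq_zero _ _ (by omega)]; simp
  · rw [nf_eq_zero _ _ (by omega), nf_eq_zero _ _ (by omega), nf_eq_zero _ _ (by omega)]; simp
  · rw [nf_eq_zero _ _ (by omega), nf_eq_zero _ _ (by omega), nf_eq_zero _ _ (by omega)]; simp

def L : MvPolynomial (Fin 2) ℤ →ₗ[ℤ] V :=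
  (MvPolynomial.basisMonomials (Fin 2) ℤ).constr ℤ (fun m => nf (m 0) (m 1))

lemma L_monomial (m : Fin 2 →₀ ℕ) (c : ℤ) : L (monomial m c) = c • nf (m 0) (m 1) := by
  have h1 : (monomial m (1:ℤ)) = (MvPolynomial.basisMonomials (Fin 2) ℤ) m := by
    rw [MvPolynomial.coe_basisMonomials]
  have h2 : monomial m c = c • monomial m (1:ℤ) := by
    rw [MvPolynomial.smul_monomial, smul_eq_mul, mul_one]
  rw [h2, map_smul, h1]
  unfold L
  rw [Module.Basis.constr_basis]

lemma X_as_monomial (n : Fin 2) :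
    (X n : MvPolynomial (Fin 2) ℤ) = monomial (Finsupp.single n 1) 1 := rfl

lemma g1_eq : (X 0 ^ 2 * X 1 + X 0 * X 1 ^ 2 : MvPolynomial (Fin 2) ℤ) =
    monomial (Finsupp.single 0 2 + Finsupp.single 1 1) 1 +
    monomial (Finsupp.single 0 1 + Finsupp.single 1 2) 1 := by
  rw [X_pow_eq_monomial, X_pow_eq_monomial, X_as_monomial 0, X_as_monomial 1, monomial_mul,
    monomial_mul]
  norm_num

lemma g2_eq : (X 0 ^ 2 + X 1 ^ 2 + X 0 * X 1 : MvPolynomial (Fin 2) ℤ) =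
    monomial (Finsupp.single 0 2) 1 + monomial (Finsupp.single 1 2) 1 +
    monomial (Finsupp.single 0 1 + Finsupp.single 1 1) 1 := by
  rw [X_pow_eq_monomial, X_pow_eq_monomial, X_as_monomial 0, X_as_monomial 1, monomial_mul]
  norm_num

lemma L_mul_g1 (p : MvPolynomial (Fin 2) ℤ) :
    L (p * (X 0 ^ 2 * X 1 + X 0 * X 1 ^ 2)) = 0 := by
  induction p using MvPolynomial.induction_on' with
  | add p q hp hq => rw [add_mul, map_add, hp, hq, add_zero]
  | monomial m c =>
    rw [g1_eq, mul_add, monomial_mul, monomial_mul, map_add, L_monomial, L_monomial, mul_one]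
    have e0 : ((m + (Finsupp.single 0 2 + Finsupp.single 1 1) : Fin 2 →₀ ℕ)) 0 = m 0 + 2 := by
      simp [Finsupp.add_apply, Finsupp.single_apply]
    have e1 : ((m + (Finsupp.single 0 2 + Finsupp.single 1 1) : Fin 2 →₀ ℕ)) 1 = m 1 + 1 := by
      simp [Finsupp.add_apply, Finsupp.single_apply]
    have e2 : ((m + (Finsupp.single 0 1 + Finsupp.single 1 2) : Fin 2 →₀ ℕ)) 0 = m 0 + 1 := by
      simp [Finsupp.add_apply, Finsupp.single_apply]
    have e3 : ((m + (Finsupp.single 0 1 + Finsupp.single 1 2) : Fin 2 →₀ ℕ)) 1 = m 1 + 2 := by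
      simp [Finsupp.add_apply, Finsupp.single_apply]
    rw [e0, e1, e2, e3, ← smul_add, nfrel1, smul_zero]

lemma L_mul_g2 (p : MvPolynomial (Fin 2) ℤ) :
    L (p * (X 0 ^ 2 + X 1 ^ 2 + X 0 * X 1)) = 0 := by
  induction p using MvPolynomial.induction_on' with
  | add p q hp hq => rw [add_mul, map_add, hp, hq, add_zero]
  | monomial m c =>
    rw [g2_eq, mul_add, mul_add, monomial_mul, monomial_mul, monomial_mul, map_add, map_add,
      L_monomial, L_monomial, L_monomial, mul_one]
    have e0 : ((m + Finsupp.single 0 2 : Fin 2 →₀ ℕ)) 0 = m 0 + 2 := by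
      simp [Finsupp.add_apply, Finsupp.single_apply]
    have e1 : ((m + Finsupp.single 0 2 : Fin 2 →₀ ℕ)) 1 = m 1 := by
      simp [Finsupp.add_apply, Finsupp.single_apply]
    have e2 : ((m + Finsupp.single 1 2 : Fin 2 →₀ ℕ)) 0 = m 0 := by
      simp [Finsupp.add_apply, Finsupp.single_apply]
    have e3 : ((m + Finsupp.single 1 2 : Fin 2 →₀ ℕ)) 1 = m 1 + 2 := by
      simp [Finsupp.add_apply, Finsupp.single_apply]
    have e4 : ((m + (Finsupp.single 0 1 + Finsupp.single 1 1) : Fin 2 →₀ ℕ)) 0 = m 0 + 1 := by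
      simp [Finsupp.add_apply, Finsupp.single_apply]
    have e5 : ((m + (Finsupp.single 0 1 + Finsupp.single 1 1) : Fin 2 →₀ ℕ)) 1 = m 1 + 1 := by
      simp [Finsupp.add_apply, Finsupp.single_apply]
    rw [e0, e1, e2, e3, e4, e5, ← smul_add, ← smul_add]
    have h' : nf (m 0 + 2) (m 1) + nf (m 0) (m 1 + 2) + nf (m 0 + 1) (m 1 + 1) = 0 := by
      rw [← nfrel2 (m 0) (m 1)]; ring
    rw [h', smul_zero]

lemma L_vanish (p : MvPolynomial (Fin 2) ℤ) (hp : p ∈ thetaIdeal) : L p = 0 := by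
  rw [Ideal.mem_span_pair] at hp
  obtain ⟨u, v, rfl⟩ := hp
  rw [map_add, L_mul_g1, L_mul_g2, add_zero]

open RTheta

lemma rel2 : (x1^2 + x2^2 + x1*x2 : RTheta) = 0 := by
  have h : (x1^2 + x2^2 + x1*x2 : RTheta) =
      Ideal.Quotient.mk thetaIdeal (X 0 ^ 2 + X 1 ^ 2 + X 0 * X 1) := by
    simp [map_add, map_mul, map_pow]
  rw [h, Ideal.Quotient.eq_zero_iff_mem]
  exact Ideal.subset_span (by simp)

lemma rel1 : (x1^2*x2 + x1*x2^2 : RTheta) = 0 := by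
  have h : (x1^2*x2 + x1*x2^2 : RTheta) =
      Ideal.Quotient.mk thetaIdeal (X 0 ^ 2 * X 1 + X 0 * X 1 ^ 2) := by
    simp [map_add, map_mul, map_pow]
  rw [h, Ideal.Quotient.eq_zero_iff_mem]
  exact Ideal.subset_span (by simp)

lemma vec6_five {α : Type*} (a b c d e f : α) : ![a,b,c,d,e,f] 5 = f := rfl

def bas : Fin 6 → RTheta := ![1, x1, x2, x1*x2, x2^2, x1*x2^2]

def Bmap : V →ₗ[ℤ] RTheta where
  toFun v := ∑ i, v i • bas i
  map_add' u v := by simp [add_smul, Finset.sum_add_distrib]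
  map_smul' c v := by simp [mul_smul, Finset.smul_sum]

def MX : V →ₗ[ℤ] V where
  toFun v := ![0, v 0, 0, - v 1 + v 2, -(v 1), -(v 3) + v 4]
  map_add' u v := by
    funext i; fin_cases i <;> simp [vec6_five] <;> ring
  map_smul' c v := by
    funext i; fin_cases i <;> simp [vec6_five] <;> ring

def MY : V →ₗ[ℤ] V where
  toFun v := ![0, 0, v 0, v 1, v 2, v 3]
  map_add' u v := by
    funext i; fin_cases i <;> simp [vec6_five]
  map_smul' c v := by
    funext i; fin_cases i <;> simp [vec6_five]

lemma Bmap_apply (v : V) : Bmap v = ∑ i, v i • bas i := rfl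

lemma MX_apply (v : V) : MX v = ![0, v 0, 0, - v 1 + v 2, -(v 1), -(v 3) + v 4] := rfl

lemma MY_apply (v : V) : MY v = ![0, 0, v 0, v 1, v 2, v 3] := rfl

lemma hx (v : V) : x1 * Bmap v = Bmap (MX v) := by
  have h1 := rel1
  have h2 := rel2
  simp only [Bmap_apply, Fin.sum_univ_six, bas, MX, LinearMap.coe_mk, AddHom.coe_mk,
    Matrix.cons_val_zero, Matrix.cons_val_one, Matrix.head_cons, Matrix.cons_val_two,
    Matrix.tail_cons, Matrix.cons_val_three, Matrix.cons_val_four, Matrix.cons_val_succ,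
    vec6_five, zsmul_eq_mul]
  push_cast
  linear_combination (v 1 : RTheta) * h2 + (v 3 : RTheta) * h1 +
    (v 5 : RTheta) * ((x1+x2)*h1 - (x1*x2)*h2)

lemma hy (v : V) : x2 * Bmap v = Bmap (MY v) := by
  have h1 := rel1
  have h2 := rel2
  simp only [Bmap_apply, Fin.sum_univ_six, bas, MY, LinearMap.coe_mk, AddHom.coe_mk,
    Matrix.cons_val_zero, Matrix.cons_val_one, Matrix.head_cons, Matrix.cons_val_two,
    Matrix.tail_cons, Matrix.cons_val_three, Matrix.cons_val_four, Matrix.cons_val_succ,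
    vec6_five, zsmul_eq_mul]
  push_cast
  linear_combination (v 4 : RTheta) * (x2*h2 - h1) + (v 5 : RTheta) * (x1*x2*h2 - x1*h1)

lemma Bmap_surj : Function.Surjective Bmap := by
  intro r
  obtain ⟨p, rfl⟩ := Ideal.Quotient.mk_surjective r
  induction p using MvPolynomial.induction_on with
  | C a =>
    refine ⟨![a,0,0,0,0,0], ?_⟩
    have h : Ideal.Quotient.mk thetaIdeal (C a) =
        ((Ideal.Quotient.mk thetaIdeal).comp (C : ℤ →+* MvPolynomial (Fin 2) ℤ)) a := rfl
    rw [h, eq_intCast]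
    simp [Bmap_apply, Fin.sum_univ_six, bas, vec6_five, zsmul_eq_mul]
  | add p q hp hq =>
    obtain ⟨u, hu⟩ := hp
    obtain ⟨w, hw⟩ := hq
    exact ⟨u + w, by rw [map_add, hu, hw, map_add]⟩
  | mul_X p i hp =>
    obtain ⟨u, hu⟩ := hp
    have hmul : Ideal.Quotient.mk thetaIdeal (p * X i) =
        Ideal.Quotient.mk thetaIdeal (X i) * Ideal.Quotient.mk thetaIdeal p := by
      rw [map_mul, mul_comm]
    fin_cases i
    · exact ⟨MX u, by rw [← hx, hu, hmul]; rfl⟩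
    · exact ⟨MY u, by rw [← hy, hu, hmul]; rfl⟩

def pbas : Fin 6 → MvPolynomial (Fin 2) ℤ := ![1, X 0, X 1, X 0 * X 1, X 1^2, X 0 * X 1^2]

lemma mk_pbas (i : Fin 6) : Ideal.Quotient.mk thetaIdeal (pbas i) = bas i := by
  fin_cases i <;> simp [pbas, bas, vec6_five, map_mul, map_pow]

lemma Bmap_eq_mk (v : V) :
    Bmap v = Ideal.Quotient.mk thetaIdeal (∑ i, v i • pbas i) := by
  rw [map_sum, Bmap_apply]
  refine Finset.sum_congr rfl fun i _ => ?_
  rw [map_zsmul, mk_pbas]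

lemma L_pbas0 : L (pbas 0) = nf 0 0 := by
  have h : (pbas 0 : MvPolynomial (Fin 2) ℤ) = monomial 0 1 := by
    rw [monomial_zero']; simp [pbas]
  rw [h, L_monomial, one_smul]
  norm_num

lemma L_pbas1 : L (pbas 1) = nf 1 0 := by
  have h : (pbas 1 : MvPolynomial (Fin 2) ℤ) = monomial (Finsupp.single 0 1) 1 := rfl
  rw [h, L_monomial, one_smul]
  norm_num [Finsupp.single_apply]

lemma L_pbas2 : L (pbas 2) = nf 0 1 := by
  have h : (pbas 2 : MvPolynomial (Fin 2) ℤ) = monomial (Finsupp.single 1 1) 1 := rfl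
  rw [h, L_monomial, one_smul]
  norm_num [Finsupp.single_apply]

lemma L_pbas3 : L (pbas 3) = nf 1 1 := by
  have h : (pbas 3 : MvPolynomial (Fin 2) ℤ) =
      monomial (Finsupp.single 0 1 + Finsupp.single 1 1) 1 := by
    show (X 0 * X 1 : MvPolynomial (Fin 2) ℤ) = _
    rw [X_as_monomial 0, X_as_monomial 1, monomial_mul]
    norm_num
  rw [h, L_monomial, one_smul]
  norm_num [Finsupp.add_apply, Finsupp.single_apply]

lemma L_pbas4 : L (pbas 4) = nf 0 2 := by
  have h : (pbas 4 : MvPolynomial (Fin 2) ℤ) = monomial (Finsupp.single 1 2) 1 := by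
    show (X 1 ^ 2 : MvPolynomial (Fin 2) ℤ) = _
    rw [X_pow_eq_monomial]
  rw [h, L_monomial, one_smul]
  norm_num [Finsupp.single_apply]

lemma L_pbas5 : L (pbas 5) = nf 1 2 := by
  have h : (pbas 5 : MvPolynomial (Fin 2) ℤ) =
      monomial (Finsupp.single 0 1 + Finsupp.single 1 2) 1 := by
    show (X 0 * X 1 ^ 2 : MvPolynomial (Fin 2) ℤ) = _
    rw [X_pow_eq_monomial, X_as_monomial 0, monomial_mul]
    norm_num
  rw [h, L_monomial, one_smul]
  norm_num [Finsupp.add_apply, Finsupp.single_apply]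

lemma L_sum (v : V) : L (∑ i, v i • pbas i) = v := by
  rw [map_sum]
  simp only [map_zsmul]
  rw [Fin.sum_univ_six, L_pbas0, L_pbas1, L_pbas2, L_pbas3, L_pbas4, L_pbas5]
  funext j
  fin_cases j <;> simp [nf, vec6_five]

lemma Bmap_inj : Function.Injective Bmap := by
  intro u w h
  have hz : Bmap (u - w) = 0 := by rw [map_sub, h, sub_self]
  have hmem : (∑ i, (u - w) i • pbas i) ∈ thetaIdeal := by
    rw [← Ideal.Quotient.eq_zero_iff_mem, ← Bmap_eq_mk, hz]
  have := L_vanish _ hmem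
  rw [L_sum] at this
  exact sub_eq_zero.mp this

lemma Bmap_bij : Function.Bijective Bmap := ⟨Bmap_inj, Bmap_surj⟩

def eV : V ≃ₗ[ℤ] RTheta := LinearEquiv.ofBijective Bmap Bmap_bij

lemma eV_apply (v : V) : eV v = Bmap v := rfl

lemma eV_symm_Bmap (v : V) : eV.symm (Bmap v) = v := by
  rw [← eV_apply, LinearEquiv.symm_apply_apply]

lemma Bmap_eV_symm (r : RTheta) : Bmap (eV.symm r) = r := by
  conv_rhs => rw [← LinearEquiv.apply_symm_apply eV r]
  rfl

lemma kosZero_apply (r : RTheta) : kosZeroZ r = (x1 * r, x2 * r) := rfl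

lemma kosOne_apply (p : RTheta × RTheta) : kosOneZ p = x1 * p.2 - x2 * p.1 := rfl

lemma kosZero_Bmap (v : V) : kosZeroZ (Bmap v) = (Bmap (MX v), Bmap (MY v)) := by
  rw [kosZero_apply, hx, hy]

lemma kosOne_Bmap (a b : V) : kosOneZ (Bmap a, Bmap b) = Bmap (MX b - MY a) := by
  rw [kosOne_apply, map_sub]
  show x1 * Bmap b - x2 * Bmap a = _
  rw [hx, hy]

lemma comp_eq_zero : kosOneZ.comp kosZeroZ = 0 := by
  apply LinearMap.ext
  intro r
  show kosOneZ (kosZeroZ r) = 0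
  rw [kosZero_apply]
  show x1 * (x2 * r) - x2 * (x1 * r) = 0
  ring

lemma mem_ker0 (v : V) (h : kosZeroZ (Bmap v) = 0) : MX v = 0 ∧ MY v = 0 := by
  rw [kosZero_Bmap] at h
  have h1 : Bmap (MX v) = Bmap 0 := by rw [map_zero]; exact congrArg Prod.fst h
  have h2 : Bmap (MY v) = Bmap 0 := by rw [map_zero]; exact congrArg Prod.snd h
  exact ⟨Bmap_inj h1, Bmap_inj h2⟩

lemma bas5_mem : bas 5 ∈ LinearMap.ker kosZeroZ := by
  rw [LinearMap.mem_ker]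
  have h : bas 5 = Bmap ![0,0,0,0,0,1] := by
    simp [Bmap_apply, Fin.sum_univ_six, vec6_five]
  rw [h, kosZero_Bmap]
  have hX : MX ![0,0,0,0,0,1] = 0 := by
    rw [MX_apply]; funext i; fin_cases i <;> simp [vec6_five]
  have hY : MY ![0,0,0,0,0,1] = 0 := by
    rw [MY_apply]; funext i; fin_cases i <;> simp [vec6_five]
  rw [hX, hY, map_zero]
  rfl

def F0 : ↥(LinearMap.ker kosZeroZ) →ₗ[ℤ] (Fin 1 → ℤ) :=
  LinearMap.pi fun _ => (LinearMap.proj (5 : Fin 6)).comp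
    (eV.symm.toLinearMap.comp (Submodule.subtype _))

def G0 : (Fin 1 → ℤ) →ₗ[ℤ] ↥(LinearMap.ker kosZeroZ) :=
  LinearMap.codRestrict _ ((LinearMap.toSpanSingleton ℤ RTheta (bas 5)).comp
    (LinearMap.proj 0)) (fun c => Submodule.smul_mem _ _ bas5_mem)

lemma F0_apply (k : ↥(LinearMap.ker kosZeroZ)) (j : Fin 1) : F0 k j = eV.symm k.1 5 := rfl

lemma G0_apply (c : Fin 1 → ℤ) : (G0 c : RTheta) = c 0 • bas 5 := rfl

def kerEquiv0 : ↥(LinearMap.ker kosZeroZ) ≃ₗ[ℤ] (Fin 1 → ℤ) := by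
  refine LinearEquiv.ofLinear F0 G0 ?_ ?_
  · apply LinearMap.ext; intro c; funext j
    show F0 (G0 c) j = c j
    rw [F0_apply]
    have h5 : bas 5 = Bmap ![0,0,0,0,0,1] := by
      simp [Bmap_apply, Fin.sum_univ_six, vec6_five]
    rw [G0_apply, h5, ← map_smul, eV_symm_Bmap]
    have hj : j = 0 := Subsingleton.elim _ _
    subst hj
    simp [vec6_five]
  · apply LinearMap.ext; intro k
    apply Subtype.ext
    show (G0 (F0 k) : RTheta) = k.1
    rw [G0_apply, F0_apply]
    set v := eV.symm k.1 with hv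
    have hB : Bmap v = k.1 := Bmap_eV_symm _
    have hker : kosZeroZ (Bmap v) = 0 := by rw [hB]; exact k.2
    obtain ⟨hX, hY⟩ := mem_ker0 v hker
    have h0 : v 0 = 0 := by have := congrFun hY 2; simpa [MY_apply] using this
    have h1 : v 1 = 0 := by have := congrFun hY 3; simpa [MY_apply] using this
    have h2 : v 2 = 0 := by have := congrFun hY 4; simpa [MY_apply] using this
    have h3 : v 3 = 0 := by have := congrFun hY 5; simpa [MY_apply, vec6_five] using this
    have h4 : v 4 = 0 := by
      have := congrFun hX 5; simp [MX_apply, vec6_five, h3] at this; exact this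
    rw [← hB, Bmap_apply, Fin.sum_univ_six, h0, h1, h2, h3, h4]
    simp

/-! coker -/

def piC : RTheta →ₗ[ℤ] (Fin 1 → ℤ) :=
  LinearMap.pi fun _ => (LinearMap.proj (0 : Fin 6)).comp eV.symm.toLinearMap

lemma piC_apply (r : RTheta) (j : Fin 1) : piC r j = eV.symm r 0 := rfl

lemma MX_zero_coord (v : V) : MX v 0 = 0 := by rw [MX_apply]; rfl

lemma MY_zero_coord (v : V) : MY v 0 = 0 := by rw [MY_apply]; rfl

lemma range_le_kerC : LinearMap.range kosOneZ ≤ LinearMap.ker piC := by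
  rintro r ⟨⟨a, b⟩, rfl⟩
  rw [LinearMap.mem_ker]
  funext j
  obtain ⟨u, rfl⟩ := Bmap_surj a
  obtain ⟨w, rfl⟩ := Bmap_surj b
  rw [kosOne_Bmap, piC_apply, eV_symm_Bmap]
  show (MX w - MY u) 0 = 0
  simp [MX_zero_coord, MY_zero_coord]

lemma one_eq_Bmap : (1 : RTheta) = Bmap ![1,0,0,0,0,0] := by
  simp [Bmap_apply, Fin.sum_univ_six, bas, vec6_five]

lemma bas_mem_range1 (i : Fin 6) (hi : i ≠ 0) : bas i ∈ LinearMap.range kosOneZ := by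
  fin_cases i
  · exact absurd rfl hi
  · exact ⟨(0, 1), by rw [kosOne_apply]; show x1 * 1 - x2 * 0 = x1; ring⟩
  · exact ⟨(-1, 0), by rw [kosOne_apply]; show x1 * 0 - x2 * (-1) = x2; ring⟩
  · exact ⟨(0, x2), by rw [kosOne_apply]; show x1 * x2 - x2 * 0 = x1 * x2; ring⟩
  · exact ⟨(-x2, 0), by rw [kosOne_apply]; show x1 * 0 - x2 * (-x2) = x2^2; ring⟩
  · exact ⟨(0, x2^2), by rw [kosOne_apply]; show x1 * x2^2 - x2 * 0 = x1 * x2^2; ring⟩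

lemma Bmap_mem_range1 (v : V) (h0 : v 0 = 0) : Bmap v ∈ LinearMap.range kosOneZ := by
  rw [Bmap_apply, Fin.sum_univ_six, h0, zero_smul, zero_add]
  refine Submodule.add_mem _ (Submodule.add_mem _ (Submodule.add_mem _ (Submodule.add_mem _
    ?_ ?_) ?_) ?_) ?_ <;>
    exact Submodule.smul_mem _ _ (bas_mem_range1 _ (by decide))

def FC : (RTheta ⧸ LinearMap.range kosOneZ) →ₗ[ℤ] (Fin 1 → ℤ) :=
  Submodule.liftQ _ piC range_le_kerC

def GC : (Fin 1 → ℤ) →ₗ[ℤ] (RTheta ⧸ LinearMap.range kosOneZ) :=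
  (Submodule.mkQ _).comp ((LinearMap.toSpanSingleton ℤ RTheta 1).comp (LinearMap.proj 0))

def cokerEquiv : (RTheta ⧸ LinearMap.range kosOneZ) ≃ₗ[ℤ] (Fin 1 → ℤ) := by
  refine LinearEquiv.ofLinear FC GC ?_ ?_
  · apply LinearMap.ext; intro c; funext j
    show piC (c 0 • (1 : RTheta)) j = c j
    rw [piC_apply, one_eq_Bmap, ← map_smul, eV_symm_Bmap]
    have hj : j = 0 := Subsingleton.elim _ _
    subst hj
    simp
  · apply LinearMap.ext; intro q
    obtain ⟨r, rfl⟩ := Submodule.mkQ_surjective _ q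
    show GC (piC r) = Submodule.mkQ _ r
    show Submodule.mkQ _ ((piC r 0) • (1:RTheta)) = Submodule.mkQ _ r
    rw [eq_comm, ← sub_eq_zero, ← map_sub, Submodule.mkQ_apply, Submodule.Quotient.mk_eq_zero]
    rw [piC_apply]
    set v := eV.symm r with hv
    have hB : Bmap v = r := Bmap_eV_symm _
    have key : r - v 0 • (1:RTheta) = Bmap (v - v 0 • ![1,0,0,0,0,0]) := by
      rw [map_sub, hB, map_smul, ← one_eq_Bmap]
    rw [key]
    apply Bmap_mem_range1
    simp

/-! middle homology -/

abbrev NN : Submodule ℤ ↥(LinearMap.ker kosOneZ) :=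
  Submodule.comap (LinearMap.ker kosOneZ).subtype (LinearMap.range kosZeroZ)

def r2a : RTheta × RTheta →ₗ[ℤ] ℤ :=
  (LinearMap.proj (4 : Fin 6)).comp (eV.symm.toLinearMap.comp (LinearMap.fst ℤ RTheta RTheta)) +
  (LinearMap.proj (3 : Fin 6)).comp (eV.symm.toLinearMap.comp (LinearMap.snd ℤ RTheta RTheta))

def r2b : RTheta × RTheta →ₗ[ℤ] ℤ :=
  (LinearMap.proj (1 : Fin 6)).comp (eV.symm.toLinearMap.comp (LinearMap.snd ℤ RTheta RTheta))

def r2 : RTheta × RTheta →ₗ[ℤ] (Fin 2 → ℤ) :=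
  LinearMap.pi (fun j => ![r2a, r2b] j)

lemma r2_apply0 (p : RTheta × RTheta) : r2 p 0 = eV.symm p.1 4 + eV.symm p.2 3 := rfl

lemma r2_apply1 (p : RTheta × RTheta) : r2 p 1 = eV.symm p.2 1 := rfl

def uu1 : RTheta × RTheta := (bas 4, 0)

def uu2 : RTheta × RTheta := (-(x1 + x2), x1)

lemma uu1_mem : uu1 ∈ LinearMap.ker kosOneZ := by
  rw [LinearMap.mem_ker, kosOne_apply]
  show x1 * 0 - x2 * (x2^2) = 0
  linear_combination rel1 - x2 * rel2

lemma uu2_mem : uu2 ∈ LinearMap.ker kosOneZ := by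
  rw [LinearMap.mem_ker, kosOne_apply]
  show x1 * x1 - x2 * (-(x1 + x2)) = 0
  linear_combination rel2

lemma hsubN : NN ≤ LinearMap.ker (r2.comp (Submodule.subtype (LinearMap.ker kosOneZ))) := by
  rintro ⟨p, hp⟩ hmem
  rw [Submodule.mem_comap] at hmem
  obtain ⟨r, hr⟩ := hmem
  obtain ⟨v, rfl⟩ := Bmap_surj r
  rw [LinearMap.mem_ker]
  show r2 p = 0
  have hr' : kosZeroZ (Bmap v) = p := hr
  rw [← hr', kosZero_Bmap]
  funext j
  fin_cases j
  · show r2 (Bmap (MX v), Bmap (MY v)) 0 = 0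
    rw [r2_apply0]
    show eV.symm (Bmap (MX v)) 4 + eV.symm (Bmap (MY v)) 3 = 0
    rw [eV_symm_Bmap, eV_symm_Bmap, MX_apply, MY_apply]
    show -(v 1) + v 1 = 0
    ring
  · show r2 (Bmap (MX v), Bmap (MY v)) 1 = 0
    rw [r2_apply1]
    show eV.symm (Bmap (MY v)) 1 = 0
    rw [eV_symm_Bmap, MY_apply]
    rfl

def sigmaM : (Fin 2 → ℤ) →ₗ[ℤ] RTheta × RTheta :=
  (LinearMap.toSpanSingleton ℤ _ uu1).comp (LinearMap.proj 0) +
  (LinearMap.toSpanSingleton ℤ _ uu2).comp (LinearMap.proj 1)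

lemma sigmaM_apply (c : Fin 2 → ℤ) : sigmaM c = c 0 • uu1 + c 1 • uu2 := rfl

lemma sigmaM_mem (c : Fin 2 → ℤ) : sigmaM c ∈ LinearMap.ker kosOneZ := by
  rw [sigmaM_apply]
  exact Submodule.add_mem _ (Submodule.smul_mem _ _ uu1_mem) (Submodule.smul_mem _ _ uu2_mem)

def FM : (↥(LinearMap.ker kosOneZ) ⧸ NN) →ₗ[ℤ] (Fin 2 → ℤ) :=
  Submodule.liftQ _ (r2.comp (Submodule.subtype _)) hsubN

def GM : (Fin 2 → ℤ) →ₗ[ℤ] (↥(LinearMap.ker kosOneZ) ⧸ NN) :=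
  (Submodule.mkQ _).comp (LinearMap.codRestrict _ sigmaM sigmaM_mem)

lemma uu1_fst : uu1.1 = Bmap ![0,0,0,0,1,0] := by
  show bas 4 = _
  simp [Bmap_apply, Fin.sum_univ_six, vec6_five]

lemma uu1_snd : uu1.2 = Bmap 0 := by rw [map_zero]; rfl

lemma uu2_fst : uu2.1 = Bmap ![0,-1,-1,0,0,0] := by
  show -(x1 + x2) = _
  simp [Bmap_apply, Fin.sum_univ_six, bas, vec6_five]
  ring

lemma uu2_snd : uu2.2 = Bmap ![0,1,0,0,0,0] := by
  show x1 = _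
  simp [Bmap_apply, Fin.sum_univ_six, bas, vec6_five]

lemma r2_uu1 : r2 uu1 = ![1, 0] := by
  funext j
  fin_cases j
  · show r2 uu1 0 = (1 : ℤ)
    rw [r2_apply0, uu1_fst, uu1_snd, eV_symm_Bmap, eV_symm_Bmap]
    show (1 : ℤ) + 0 = 1
    ring
  · show r2 uu1 1 = (0 : ℤ)
    rw [r2_apply1, uu1_snd, eV_symm_Bmap]
    rfl

lemma r2_uu2 : r2 uu2 = ![0, 1] := by
  funext j
  fin_cases j
  · show r2 uu2 0 = (0 : ℤ)
    rw [r2_apply0, uu2_fst, uu2_snd, eV_symm_Bmap, eV_symm_Bmap]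
    show (0 : ℤ) + 0 = 0
    ring
  · show r2 uu2 1 = (1 : ℤ)
    rw [r2_apply1, uu2_snd, eV_symm_Bmap]
    rfl

set_option maxHeartbeats 2000000 in
def midEquiv : (↥(LinearMap.ker kosOneZ) ⧸ NN) ≃ₗ[ℤ] (Fin 2 → ℤ) := by
  refine LinearEquiv.ofLinear FM GM ?_ ?_
  · apply LinearMap.ext; intro c
    show FM (GM c) = c
    have h : FM (GM c) = r2 (sigmaM c) := rfl
    rw [h, sigmaM_apply, map_add, map_smul, map_smul, r2_uu1, r2_uu2]
    funext j
    fin_cases j <;> simp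
  · apply LinearMap.ext; intro q
    obtain ⟨x, rfl⟩ := Submodule.mkQ_surjective _ q
    obtain ⟨⟨a, b⟩, hab⟩ := x
    show Submodule.mkQ _ (LinearMap.codRestrict _ sigmaM sigmaM_mem (r2 (a, b))) =
      Submodule.mkQ _ ⟨(a, b), hab⟩
    rw [Submodule.mkQ_apply, Submodule.mkQ_apply, Submodule.Quotient.eq]
    rw [Submodule.mem_comap]
    show sigmaM (r2 (a, b)) - (a, b) ∈ LinearMap.range kosZeroZ
    set u := eV.symm a with hu
    set w := eV.symm b with hw
    have ha : Bmap u = a := Bmap_eV_symm _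
    have hb : Bmap w = b := Bmap_eV_symm _
    have hMXY : MX w = MY u := by
      apply sub_eq_zero.mp
      apply Bmap_inj
      rw [map_zero, ← kosOne_Bmap, ha, hb]
      exact hab
    have hc1 : w 0 = 0 := by
      have h := congrFun hMXY 1
      simpa [MX_apply, MY_apply] using h
    have hc2 : u 0 = 0 := by
      have h := congrFun hMXY 2
      simp [MX_apply, MY_apply] at h
      omega
    have hc3 : -(w 1) + w 2 = u 1 := by
      have h := congrFun hMXY 3
      simpa [MX_apply, MY_apply] using h
    have hc4 : -(w 1) = u 2 := by
      have h := congrFun hMXY 4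
      simpa [MX_apply, MY_apply] using h
    have hc5 : -(w 3) + w 4 = u 3 := by
      have h := congrFun hMXY 5
      simpa [MX_apply, MY_apply, vec6_five] using h
    have hr0 : r2 (a, b) 0 = u 4 + w 3 := r2_apply0 (a, b)
    have hr1 : r2 (a, b) 1 = w 1 := r2_apply1 (a, b)
    set c0 : ℤ := u 4 + w 3 with hcc0
    set c1 : ℤ := w 1 with hcc1
    set sv : V := ![w 2, w 3, w 4, w 5, u 5 + w 5, 0] with hsv
    have key : (a, b) - sigmaM (r2 (a, b)) = kosZeroZ (Bmap sv) := by
      rw [kosZero_Bmap, sigmaM_apply, hr0, hr1]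
      have hfst : a - (c0 • uu1.1 + c1 • uu2.1) = Bmap (MX sv) := by
        rw [← ha, uu1_fst, uu2_fst, ← map_smul, ← map_smul, ← map_add, ← map_sub]
        apply congrArg
        funext i
        fin_cases i <;>
          simp [MX_apply, hsv, vec6_five] <;> linarith [hc1, hc2, hc3, hc4, hc5]
      have hsnd : b - (c0 • uu1.2 + c1 • uu2.2) = Bmap (MY sv) := by
        rw [← hb, uu1_snd, uu2_snd, ← map_smul, ← map_smul, ← map_add, ← map_sub]
        apply congrArg
        funext i
        fin_cases i <;>
          simp [MY_apply, hsv, vec6_five] <;> linarith [hc1, hc2, hc3, hc4, hc5]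
      have hexp : (a, b) - (c0 • uu1 + c1 • uu2) =
          (a - (c0 • uu1.1 + c1 • uu2.1), b - (c0 • uu1.2 + c1 • uu2.2)) := rfl
      rw [hexp, hfst, hsnd]
    have hneg : sigmaM (r2 (a, b)) - (a, b) = -((a, b) - sigmaM (r2 (a, b))) := by abel
    rw [hneg, key]
    exact Submodule.neg_mem _ ⟨Bmap sv, rfl⟩

end ThetaAux

open ThetaAux RTheta

theorem RTheta_koszul_homology_free :
    kosOneZ.comp kosZeroZ = 0 ∧
    Nonempty (Module.Basis (Fin 1) ℤ ↥(LinearMap.ker kosZeroZ)) ∧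
    Nonempty (Module.Basis (Fin 2) ℤ
      (↥(LinearMap.ker kosOneZ) ⧸
        Submodule.comap (LinearMap.ker kosOneZ).subtype (LinearMap.range kosZeroZ))) ∧
    Nonempty (Module.Basis (Fin 1) ℤ (RTheta ⧸ LinearMap.range kosOneZ)) ∧
    Nonempty (Module.Basis (Fin 4) ℤ
      (↥(LinearMap.ker kosZeroZ) ×
        (↥(LinearMap.ker kosOneZ) ⧸
          Submodule.comap (LinearMap.ker kosOneZ).subtype (LinearMap.range kosZeroZ)) ×
        (RTheta ⧸ LinearMap.range kosOneZ))) := by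
  refine ⟨comp_eq_zero, ⟨Module.Basis.ofEquivFun kerEquiv0⟩, ⟨Module.Basis.ofEquivFun midEquiv⟩,
    ⟨Module.Basis.ofEquivFun cokerEquiv⟩, ⟨?_⟩⟩
  exact ((Module.Basis.ofEquivFun kerEquiv0).prod
    ((Module.Basis.ofEquivFun midEquiv).prod (Module.Basis.ofEquivFun cokerEquiv))).reindex
    ((Equiv.sumCongr (Equiv.refl (Fin 1)) finSumFinEquiv).trans finSumFinEquiv)

end
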